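/- Let W = {x ∈ [0,∞) : T^k(x) ∉ ℤ for all k ∈ ℕ}, equipped with the subspace topology from ℝ, and define ι : W → (ℤ⁺)^ℕ by letting ι(x)_k be the unique positive integer i with T^k(x) ∈ (i − 1, i). Equip (ℤ⁺)^ℕ with the product topology, ℤ⁺ being discrete. Then ι is a homeomorphism of W onto its image, and ι(T(x)) = σ(ι(x)) for all x ∈ W, where σ : (ℤ⁺)^ℕ → (ℤ⁺)^ℕ is the left shift (σ(a)_k = a_{k+1}). -/

import Mathlib

open Set Filter

noncomputable section

/-- `ell n = min {k ∈ ℤ⁺ : n ≤ 4^k}`. -/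
def ell (n : ℕ) : ℕ := sInf {k : ℕ | 1 ≤ k ∧ n ≤ 4 ^ k}

/-- The value of the map `T` at the nonnegative integer `n`:
`0` if `n` is even and `4 ^ ℓ(n) + 1` if `n` is odd. -/
def Tval (n : ℕ) : ℝ := if Even n then 0 else 4 ^ ell n + 1

/-- `T : [0,∞) → [0,∞)` is the unique continuous map which is affine on each
integer interval `[n-1, n]` and takes the value `Tval n` at every nonnegative
integer `n`.  This is expressed by linear interpolation on each `[n, n+1]`. -/
def IsT (T : ℝ → ℝ) : Prop :=
  ∀ n : ℕ, ∀ x ∈ Set.Icc (n : ℝ) (n + 1),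
    T x = ((n : ℝ) + 1 - x) * Tval n + (x - (n : ℝ)) * Tval (n + 1)

/-- `(x_k)` is a `δ`-pseudo orbit of `T` in `[0,∞)`. -/
def IsPseudoOrbit (T : ℝ → ℝ) (δ : ℝ) (x : ℕ → ℝ) : Prop :=
  (∀ k, 0 ≤ x k) ∧ ∀ k, |x (k + 1) - T (x k)| < δ

lemma ell_spec (n : ℕ) : 1 ≤ ell n ∧ n ≤ 4 ^ ell n := by
  have hmem : (max 1 n) ∈ {k : ℕ | 1 ≤ k ∧ n ≤ 4 ^ k} :=
    ⟨le_max_left _ _,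
      le_trans (Nat.lt_pow_self (by norm_num : 1 < 4) : n < 4 ^ n).le
        (Nat.pow_le_pow_right (by norm_num) (le_max_right _ _))⟩
  exact Nat.sInf_mem ⟨_, hmem⟩

lemma five_le_Tval {m : ℕ} (hm : ¬ Even m) : (5 : ℝ) ≤ Tval m := by
  rw [Tval, if_neg hm]
  have h1 : 1 ≤ ell m := (ell_spec m).1
  have h2 : (4 : ℝ) ^ 1 ≤ 4 ^ ell m := pow_le_pow_right₀ (by norm_num) h1
  norm_num at h2
  linarith

lemma five_le_abs_Tval_sub (n : ℕ) : 5 ≤ |Tval (n + 1) - Tval n| := by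
  rcases Nat.even_or_odd n with h | h
  · have h0 : Tval n = 0 := by simp [Tval, h]
    have h5 := five_le_Tval (m := n + 1) (by simp [Nat.even_add_one, h])
    rw [h0, sub_zero, abs_of_nonneg (by linarith)]
    exact h5
  · have h0 : Tval (n + 1) = 0 := by
      simp [Tval, Nat.even_add_one, Nat.not_even_iff_odd.mpr h]
    have h5 := five_le_Tval (m := n) (Nat.not_even_iff_odd.mpr h)
    rw [h0, zero_sub, abs_neg, abs_of_nonneg (by linarith)]
    exact h5

lemma T_sub {T : ℝ → ℝ} (hT : IsT T) (n : ℕ) {x y : ℝ}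
    (hx : x ∈ Set.Icc (n : ℝ) (n + 1)) (hy : y ∈ Set.Icc (n : ℝ) (n + 1)) :
    T x - T y = (x - y) * (Tval (n + 1) - Tval n) := by
  rw [hT n x hx, hT n y hy]; ring

lemma Ioo_unique {i j : ℕ} {z : ℝ} (hi : z ∈ Set.Ioo ((i : ℝ) - 1) i)
    (hj : z ∈ Set.Ioo ((j : ℝ) - 1) j) : i = j := by
  obtain ⟨h1, h2⟩ := hi
  obtain ⟨h3, h4⟩ := hj
  have hij : (i : ℝ) < (j : ℕ) + 1 := by push_cast; linarith
  have hji : (j : ℝ) < (i : ℕ) + 1 := by push_cast; linarith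
  have h5 : i < j + 1 := by exact_mod_cast hij
  have h6 : j < i + 1 := by exact_mod_cast hji
  omega

lemma step_expand {T : ℝ → ℝ} (hT : IsT T) {i : ℕ} (hi : 1 ≤ i) {a b : ℝ}
    (ha : a ∈ Set.Ioo ((i : ℝ) - 1) i) (hb : b ∈ Set.Ioo ((i : ℝ) - 1) i) :
    5 * |a - b| ≤ |T a - T b| := by
  obtain ⟨n, rfl⟩ : ∃ n, i = n + 1 := ⟨i - 1, by omega⟩
  obtain ⟨ha1, ha2⟩ := ha
  obtain ⟨hb1, hb2⟩ := hb
  push_cast at ha1 ha2 hb1 hb2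
  have ha' : a ∈ Set.Icc (n : ℝ) (n + 1) := ⟨by linarith, by linarith⟩
  have hb' : b ∈ Set.Icc (n : ℝ) (n + 1) := ⟨by linarith, by linarith⟩
  rw [T_sub hT n ha' hb', abs_mul]
  have h5 := five_le_abs_Tval_sub n
  nlinarith [abs_nonneg (a - b)]

/-- The itinerary map `ι` is a homeomorphism of
`W = {x ∈ [0,∞) : T^k x ∉ ℤ for all k}` onto its image in `(ℤ⁺)^ℕ` (with the
product topology, the factors being discrete) and conjugates `T` with the left
shift. -/
theorem itinerary_embedding_and_conjugacy (T : ℝ → ℝ) (hT : IsT T)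
    (W : Set ℝ)
    (hW : W = {x : ℝ | 0 ≤ x ∧ ∀ k : ℕ, ∀ m : ℤ, T^[k] x ≠ (m : ℝ)})
    (ι : W → ℕ → ℕ)
    (hι : ∀ x : W, ∀ k : ℕ, 1 ≤ ι x k ∧
      T^[k] (x : ℝ) ∈ Set.Ioo ((ι x k : ℝ) - 1) (ι x k)) :
    Topology.IsEmbedding ι ∧
      ∀ x y : W, (y : ℝ) = T (x : ℝ) → ∀ k : ℕ, ι y k = ι x (k + 1) := by
  -- expansion estimate
  have expand : ∀ (x y : W) (N : ℕ), (∀ k < N, ι x k = ι y k) →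
      5 ^ N * |(x : ℝ) - y| ≤ |T^[N] (x : ℝ) - T^[N] (y : ℝ)| := by
    intro x y N
    induction N with
    | zero => intro _; simp
    | succ N ih =>
      intro h
      have hN := ih fun k hk => h k (Nat.lt_succ_of_lt hk)
      have hxy : ι x N = ι y N := h N (Nat.lt_succ_self N)
      have hxN := (hι x N).2
      have hyN := (hι y N).2
      rw [hxy] at hxN
      have hstep := step_expand hT (hι y N).1 hxN hyN
      rw [Function.iterate_succ_apply', Function.iterate_succ_apply']
      have h5 : (0 : ℝ) ≤ 5 ^ N * |(x : ℝ) - y| := by positivity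
      calc 5 ^ (N + 1) * |(x : ℝ) - y| = 5 * (5 ^ N * |(x : ℝ) - y|) := by ring
        _ ≤ 5 * |T^[N] (x : ℝ) - T^[N] (y : ℝ)| := by linarith
        _ ≤ _ := hstep
  -- closeness estimate
  have close : ∀ (x y : W) (N : ℕ), (∀ k ≤ N, ι x k = ι y k) →
      |(x : ℝ) - y| < (1 / 5 : ℝ) ^ N := by
    intro x y N h
    have h1 := expand x y N fun k hk => h k hk.le
    have hxy : ι x N = ι y N := h N le_rfl
    have hxN := (hι x N).2
    have hyN := (hι y N).2
    rw [hxy] at hxN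
    have hgap : |T^[N] (x : ℝ) - T^[N] (y : ℝ)| < 1 := by
      rw [abs_sub_lt_iff]
      constructor <;> [linarith [hxN.1, hxN.2, hyN.1, hyN.2];
        linarith [hxN.1, hxN.2, hyN.1, hyN.2]]
    have h5 : (0 : ℝ) < 5 ^ N := by positivity
    rw [div_pow, one_pow, lt_div_iff₀ h5]
    nlinarith
  -- injectivity
  have hinj : Function.Injective ι := by
    intro x y h
    ext
    by_contra hne
    have hpos : 0 < |(x : ℝ) - y| := by
      rw [abs_pos, sub_ne_zero]
      exact fun hc => hne (by exact_mod_cast hc)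
    obtain ⟨N, hN⟩ := exists_pow_lt_of_lt_one hpos (by norm_num : (1 / 5 : ℝ) < 1)
    have := close x y N fun k _ => congrFun h k
    linarith
  -- continuity of T at itinerary points
  have contT : ∀ {i : ℕ}, 1 ≤ i → ∀ {z : ℝ}, z ∈ Set.Ioo ((i : ℝ) - 1) i →
      ContinuousAt T z := by
    intro i hi z hz
    obtain ⟨n, rfl⟩ : ∃ n, i = n + 1 := ⟨i - 1, by omega⟩
    obtain ⟨h1, h2⟩ := hz
    push_cast at h1 h2
    have hz' : z ∈ Set.Ioo (n : ℝ) (n + 1) := ⟨by linarith, by linarith⟩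
    have heq : T =ᶠ[nhds z]
        fun w => ((n : ℝ) + 1 - w) * Tval n + (w - n) * Tval (n + 1) := by
      filter_upwards [isOpen_Ioo.mem_nhds hz'] with w hw
      exact hT n w (Set.Ioo_subset_Icc_self hw)
    exact ContinuousAt.congr (by fun_prop) heq.symm
  -- continuity of iterates on W
  have contIter : ∀ (x : W) (k : ℕ),
      ContinuousAt (fun y : W => T^[k] (y : ℝ)) x := by
    intro x k
    induction k with
    | zero => simpa using continuous_subtype_val.continuousAt
    | succ k ih =>
      have h := contT (hι x k).1 (hι x k).2
      simp only [Function.iterate_succ_apply']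
      exact ContinuousAt.comp (f := fun y : W => T^[k] (y : ℝ)) h ih
  -- coordinates are locally constant
  have evco : ∀ (x : W) (k : ℕ), ∀ᶠ y : W in nhds x, ι y k = ι x k := by
    intro x k
    have h1 := (hι x k).2
    have h2 : (fun y : W => T^[k] (y : ℝ)) ⁻¹' Set.Ioo ((ι x k : ℝ) - 1) (ι x k)
        ∈ nhds x := (contIter x k).preimage_mem_nhds (isOpen_Ioo.mem_nhds h1)
    filter_upwards [h2] with y hy
    exact Ioo_unique (hι y k).2 hy
  -- continuity of ι
  have hcont : Continuous ι := by
    rw [continuous_pi_iff]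
    intro k
    rw [continuous_iff_continuousAt]
    intro x
    exact Filter.Tendsto.congr' ((evco x k).mono fun y hy => hy.symm)
      tendsto_const_nhds
  constructor
  · apply Topology.IsEmbedding.mk' ι hinj
    intro x
    refine le_antisymm ?_ (hcont.continuousAt (x := x)).le_comap
    intro s hs
    rw [Metric.mem_nhds_iff] at hs
    obtain ⟨ε, hε, hball⟩ := hs
    obtain ⟨N, hN⟩ := exists_pow_lt_of_lt_one hε (by norm_num : (1 / 5 : ℝ) < 1)
    rw [mem_comap]
    refine ⟨{a : ℕ → ℕ | ∀ k ≤ N, a k = ι x k}, ?_, ?_⟩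
    · have : {a : ℕ → ℕ | ∀ k ≤ N, a k = ι x k}
          = ⋂ k ∈ Set.Iic N, (fun a : ℕ → ℕ => a k) ⁻¹' {ι x k} := by
        ext a; simp [Set.mem_iInter]
      rw [this]
      exact (Filter.biInter_mem (Set.finite_Iic N)).2 fun k _ =>
        ((isOpen_discrete {ι x k}).preimage (continuous_apply k)).mem_nhds rfl
    · intro y hy
      apply hball
      have := close x y N fun k hk => (hy k hk).symm
      rw [Metric.mem_ball, Subtype.dist_eq, Real.dist_eq]
      calc |(y : ℝ) - x| = |(x : ℝ) - y| := abs_sub_comm _ _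
        _ < (1 / 5) ^ N := this
        _ < ε := hN
  · intro x y hxy k
    have h1 := (hι y k).2
    have h2 := (hι x (k + 1)).2
    rw [Function.iterate_succ_apply, ← hxy] at h2
    exact Ioo_unique h1 h2
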